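/- Let ℓ : ℝ → ℝ be non-increasing, convex, and lower-semicontinuous, y ∈ {-1, 1}, x, θ ∈ ℝ^p, δ ≥ 0. Then max_{‖Δx‖ ≤ δ} ℓ(y·((x + Δx)ᵀθ)) = ℓ(y·(xᵀθ) - δ‖θ‖_*). -/

import Mathlib

open Matrix

/-- The dual norm `‖θ‖_* = sup_{‖x‖ ≤ 1} |θᵀx|` of a norm `N` on `ℝ^p`. -/
noncomputable def dualNorm {p : ℕ} (N : (Fin p → ℝ) → ℝ) (θ : Fin p → ℝ) : ℝ :=
  sSup {v | ∃ x : Fin p → ℝ, N x ≤ 1 ∧ v = |θ ⬝ᵥ x|}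

section Aux

variable {p : ℕ}

lemma N_nonneg (N : (Fin p → ℝ) → ℝ)
    (hN_eq : ∀ v, N v = 0 ↔ v = 0)
    (hN_smul : ∀ (a : ℝ) v, N (a • v) = |a| * N v)
    (hN_add : ∀ v w, N (v + w) ≤ N v + N w) (v : Fin p → ℝ) : 0 ≤ N v := by
  have h0 : N 0 = 0 := (hN_eq 0).2 rfl
  have h1 : N (v + (-1 : ℝ) • v) ≤ N v + N ((-1 : ℝ) • v) := hN_add _ _
  rw [hN_smul] at h1
  have h2 : v + (-1 : ℝ) • v = 0 := by
    simp [neg_one_smul]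
  rw [h2, h0] at h1
  simp at h1
  linarith

lemma N_cont (N : (Fin p → ℝ) → ℝ)
    (hN_eq : ∀ v, N v = 0 ↔ v = 0)
    (hN_smul : ∀ (a : ℝ) v, N (a • v) = |a| * N v)
    (hN_add : ∀ v w, N (v + w) ≤ N v + N w) : Continuous N := by
  have h0 : N 0 = 0 := (hN_eq 0).2 rfl
  -- bound via coordinates
  have hsum : ∀ (s : Finset (Fin p)) (f : Fin p → (Fin p → ℝ)),
      N (∑ i ∈ s, f i) ≤ ∑ i ∈ s, N (f i) := by
    intro s
    induction s using Finset.induction with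
    | empty => intro f; simp [h0]
    | insert _ _ hi ih =>
      intro f
      rw [Finset.sum_insert hi, Finset.sum_insert hi]
      exact le_trans (hN_add _ _) (by linarith [ih f])
  have hbound : ∀ v : Fin p → ℝ, N v ≤ ∑ i, |v i| * N (Pi.single i 1) := by
    intro v
    have hv : v = ∑ i, (v i) • (Pi.single i (1 : ℝ) : Fin p → ℝ) := by
      funext j
      simp [Finset.sum_apply, Pi.single_apply, Finset.sum_ite_eq, mul_comm]
    calc N v = N (∑ i, (v i) • (Pi.single i (1 : ℝ) : Fin p → ℝ)) := by rw [← hv]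
      _ ≤ ∑ i, N ((v i) • (Pi.single i (1 : ℝ) : Fin p → ℝ)) := hsum _ _
      _ = ∑ i, |v i| * N (Pi.single i 1) := Finset.sum_congr rfl fun i _ => hN_smul _ _
  have hnn := N_nonneg N hN_eq hN_smul hN_add
  set K : ℝ := ∑ i, N (Pi.single i (1 : ℝ)) with hK
  have hKnn : 0 ≤ K := Finset.sum_nonneg fun i _ => hnn _
  rw [Metric.continuous_iff]
  intro b ε hε
  refine ⟨ε / (K + 1), by positivity, fun a hab => ?_⟩
  have hdiff : ∀ u w : Fin p → ℝ, N u - N w ≤ N (u - w) := by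
    intro u w
    have := hN_add (u - w) w
    simp at this
    linarith
  have hsub : N (a - b) ≤ dist a b * K := by
    calc N (a - b) ≤ ∑ i, |(a - b) i| * N (Pi.single i 1) := hbound _
      _ ≤ ∑ i, dist a b * N (Pi.single i 1) := by
          apply Finset.sum_le_sum
          intro i _
          have h1 : |(a - b) i| = dist (a i) (b i) := by
            rw [Real.dist_eq]; simp
          rw [h1]
          exact mul_le_mul_of_nonneg_right (dist_le_pi_dist a b i) (hnn _)
      _ = dist a b * K := by rw [← Finset.mul_sum]
  have hsub' : N (b - a) ≤ dist a b * K := by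
    have : b - a = (-1 : ℝ) • (a - b) := by simp
    rw [this, hN_smul]
    simpa using hsub
  rw [Real.dist_eq, abs_sub_lt_iff]
  have h1 := hdiff a b
  have h2 := hdiff b a
  have hd : dist a b * K < ε := by
    calc dist a b * K ≤ dist a b * (K + 1) := by nlinarith [dist_nonneg (x := a) (y := b)]
      _ < ε := by
          have hK1 : (0:ℝ) < K + 1 := by linarith
          calc dist a b * (K + 1) < (ε / (K + 1)) * (K + 1) := by
                apply mul_lt_mul_of_pos_right hab hK1
            _ = ε := by field_simp
  constructor <;> linarith

lemma N_lower (N : (Fin p → ℝ) → ℝ)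
    (hN_eq : ∀ v, N v = 0 ↔ v = 0)
    (hN_smul : ∀ (a : ℝ) v, N (a • v) = |a| * N v)
    (hN_add : ∀ v w, N (v + w) ≤ N v + N w) :
    ∃ c : ℝ, 0 < c ∧ ∀ v : Fin p → ℝ, c * ‖v‖ ≤ N v := by
  have h0 : N 0 = 0 := (hN_eq 0).2 rfl
  by_cases hp : p = 0
  · refine ⟨1, one_pos, fun v => ?_⟩
    subst hp
    have hv : v = 0 := Subsingleton.elim v 0
    rw [hv, h0, norm_zero]
    norm_num
  · haveI : Nonempty (Fin p) := ⟨⟨0, Nat.pos_of_ne_zero hp⟩⟩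
    haveI : Nontrivial (Fin p → ℝ) := by infer_instance
    have hcont := N_cont N hN_eq hN_smul hN_add
    have hcomp : IsCompact (Metric.sphere (0 : Fin p → ℝ) 1) := isCompact_sphere 0 1
    have hne : (Metric.sphere (0 : Fin p → ℝ) 1).Nonempty :=
      NormedSpace.sphere_nonempty.2 zero_le_one
    obtain ⟨x₀, hx₀S, hx₀min⟩ := hcomp.exists_isMinOn hne hcont.continuousOn
    have hx₀norm : ‖x₀‖ = 1 := by simpa using hx₀S
    have hx₀ne : x₀ ≠ 0 := by
      intro h; rw [h] at hx₀norm; simp at hx₀norm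
    have hc : 0 < N x₀ := by
      rcases lt_or_eq_of_le (N_nonneg N hN_eq hN_smul hN_add x₀) with h | h
      · exact h
      · exact absurd ((hN_eq x₀).1 h.symm) hx₀ne
    refine ⟨N x₀, hc, fun v => ?_⟩
    by_cases hv : v = 0
    · simp [hv, h0]
    · set u : Fin p → ℝ := ‖v‖⁻¹ • v with hu
      have hvn : (0:ℝ) < ‖v‖ := norm_pos_iff.2 hv
      have huS : u ∈ Metric.sphere (0 : Fin p → ℝ) 1 := by
        simp [hu, norm_smul, abs_of_pos (inv_pos.2 hvn), inv_mul_cancel₀ hvn.ne']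
      have hNu : N x₀ ≤ N u := hx₀min huS
      have hvu : v = ‖v‖ • u := by
        rw [hu, smul_smul, mul_inv_cancel₀ hvn.ne', one_smul]
      calc N x₀ * ‖v‖ = ‖v‖ * N x₀ := mul_comm _ _
        _ ≤ ‖v‖ * N u := by nlinarith
        _ = |‖v‖| * N u := by rw [abs_of_pos hvn]
        _ = N (‖v‖ • u) := (hN_smul _ _).symm
        _ = N v := by rw [← hvu]

lemma dual_attained (N : (Fin p → ℝ) → ℝ)
    (hN_eq : ∀ v, N v = 0 ↔ v = 0)
    (hN_smul : ∀ (a : ℝ) v, N (a • v) = |a| * N v)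
    (hN_add : ∀ v w, N (v + w) ≤ N v + N w) (θ : Fin p → ℝ) :
    ∃ z : Fin p → ℝ, N z ≤ 1 ∧ dualNorm N θ = |θ ⬝ᵥ z| ∧
      ∀ w : Fin p → ℝ, N w ≤ 1 → |θ ⬝ᵥ w| ≤ |θ ⬝ᵥ z| := by
  have h0 : N 0 = 0 := (hN_eq 0).2 rfl
  have hcont := N_cont N hN_eq hN_smul hN_add
  obtain ⟨c, hc, hlow⟩ := N_lower N hN_eq hN_smul hN_add
  set B : Set (Fin p → ℝ) := {x | N x ≤ 1} with hB
  have hBclosed : IsClosed B := isClosed_Iic.preimage hcont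
  have hBbdd : Bornology.IsBounded B := by
    apply (Metric.isBounded_closedBall (x := (0 : Fin p → ℝ)) (r := c⁻¹)).subset
    intro z hz
    simp only [Metric.mem_closedBall, dist_zero_right]
    have h1 : c * ‖z‖ ≤ 1 := le_trans (hlow z) hz
    calc ‖z‖ = c⁻¹ * (c * ‖z‖) := by field_simp
      _ ≤ c⁻¹ * 1 := mul_le_mul_of_nonneg_left h1 (inv_pos.2 hc).le
      _ = c⁻¹ := mul_one _
  have hBcomp : IsCompact B := Metric.isCompact_of_isClosed_isBounded hBclosed hBbdd
  have hfcont : Continuous fun z : Fin p → ℝ => |θ ⬝ᵥ z| := by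
    apply continuous_abs.comp
    exact continuous_finset_sum _ fun i _ => continuous_const.mul (continuous_apply i)
  have hBne : B.Nonempty := ⟨0, by simp only [hB, Set.mem_setOf_eq, h0]; norm_num⟩
  obtain ⟨z, hzB, hzmax⟩ := hBcomp.exists_isMaxOn hBne hfcont.continuousOn
  refine ⟨z, hzB, ?_, fun w hw => hzmax hw⟩
  apply IsGreatest.csSup_eq
  constructor
  · exact ⟨z, hzB, rfl⟩
  · rintro v ⟨w, hw, rfl⟩
    exact hzmax hw

end Aux

theorem stmt4 {p : ℕ} (N : (Fin p → ℝ) → ℝ)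
    (hN_eq : ∀ v, N v = 0 ↔ v = 0)
    (hN_smul : ∀ (a : ℝ) v, N (a • v) = |a| * N v)
    (hN_add : ∀ v w, N (v + w) ≤ N v + N w)
    (ℓ : ℝ → ℝ) (hℓ_anti : Antitone ℓ) (hℓ_conv : ConvexOn ℝ Set.univ ℓ)
    (hℓ_lsc : LowerSemicontinuous ℓ)
    (y : ℝ) (hy : y = -1 ∨ y = 1)
    (x θ : Fin p → ℝ) (δ : ℝ) (hδ : 0 ≤ δ) :
    IsGreatest {v | ∃ Δx : Fin p → ℝ, N Δx ≤ δ ∧ v = ℓ (y * ((x + Δx) ⬝ᵥ θ))}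
      (ℓ (y * (x ⬝ᵥ θ) - δ * dualNorm N θ)) := by
  obtain ⟨z, hzB, hdual, hmax⟩ := dual_attained N hN_eq hN_smul hN_add θ
  have hy2 : y * y = 1 := by rcases hy with h | h <;> simp [h]
  have hyabs : |y| = 1 := by rcases hy with h | h <;> simp [h]
  set D : ℝ := dualNorm N θ with hD
  constructor
  · -- membership: pick Δx achieving the worst case
    set s : ℝ := if 0 ≤ θ ⬝ᵥ z then 1 else -1 with hs
    have hsabs : |s| = 1 := by
      rw [hs]; split_ifs <;> simp
    have hszD : s * (z ⬝ᵥ θ) = |θ ⬝ᵥ z| := by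
      rw [dotProduct_comm z θ, hs]
      split_ifs with h
      · rw [one_mul, abs_of_nonneg h]
      · rw [abs_of_neg (lt_of_not_ge h)]; ring
    refine ⟨(-(y * δ * s)) • z, ?_, ?_⟩
    · rw [hN_smul]
      have : |(-(y * δ * s))| = δ := by
        rw [abs_neg, abs_mul, abs_mul, hyabs, hsabs, abs_of_nonneg hδ]
        ring
      rw [this]
      calc δ * N z ≤ δ * 1 := mul_le_mul_of_nonneg_left hzB hδ
        _ = δ := mul_one δ
    · congr 1
      rw [add_dotProduct, smul_dotProduct]
      have : y * (x ⬝ᵥ θ + (-(y * δ * s)) • (z ⬝ᵥ θ)) =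
          y * (x ⬝ᵥ θ) - (y * y) * δ * (s * (z ⬝ᵥ θ)) := by
        simp only [smul_eq_mul]; ring
      rw [this, hy2, hszD, ← hdual]
      ring
  · -- upper bound
    rintro v ⟨Δx, hΔx, rfl⟩
    apply hℓ_anti
    have hkey : |θ ⬝ᵥ Δx| ≤ δ * D := by
      rcases eq_or_lt_of_le hδ with h | h
      · have hΔ0 : N Δx ≤ 0 := by rw [h]; exact hΔx
        have : N Δx = 0 := le_antisymm hΔ0 (N_nonneg N hN_eq hN_smul hN_add Δx)
        have hΔxz : Δx = 0 := (hN_eq Δx).1 this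
        simp [hΔxz, ← h]
      · have h1 : N (δ⁻¹ • Δx) ≤ 1 := by
          rw [hN_smul, abs_of_pos (inv_pos.2 h)]
          rw [inv_mul_le_iff₀ h, mul_one]
          exact hΔx
        have h2 := hmax _ h1
        rw [dotProduct_smul] at h2
        rw [smul_eq_mul, abs_mul, abs_of_pos (inv_pos.2 h)] at h2
        rw [← hdual] at h2
        calc |θ ⬝ᵥ Δx| = δ * (δ⁻¹ * |θ ⬝ᵥ Δx|) := by field_simp
          _ ≤ δ * D := mul_le_mul_of_nonneg_left h2 hδ
    have hineq : y * (x ⬝ᵥ θ) - δ * D ≤ y * ((x + Δx) ⬝ᵥ θ) := by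
      rw [add_dotProduct, mul_add]
      have : |y * (Δx ⬝ᵥ θ)| ≤ δ * D := by
        rw [abs_mul, hyabs, one_mul, dotProduct_comm]
        exact hkey
      have := abs_le.1 this
      linarith [this.1]
    exact hineq
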